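/- arXiv:2108.11066 — 3 statements merged into one kernel-verified Lean document; each statement's English description precedes it below -/
import Mathlib

section
/- Lemma 1(a): The cut posterior minimizes the Kullback–Leibler divergence to the full posterior over all joint distributions with the prescribed first marginal. Precisely, for every probability measure q ∈ F_cut on Φ × H (i.e., with first marginal q.fst = μ), one has KL(π_cut ‖ π) ≤ KL(q ‖ π), so π_cut = μ ⊗ π(·|·) is a minimizer of q ↦ KL(q ‖ π) over F_cut. -/
open MeasureTheory ProbabilityTheory
open scoped ENNReal NNReal Classical

/-- Kullback–Leibler divergence with values in `[0,∞]`: equal to `∫ log (dν/dρ) dν` when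
`ν ≪ ρ` (and this integral is well defined), and `∞` otherwise. -/

noncomputable def klDiv {α : Type*} [MeasurableSpace α] (ν ρ : Measure α) : ℝ≥0∞ :=
  if ν ≪ ρ ∧ Integrable (llr ν ρ) ν then ENNReal.ofReal (∫ x, llr ν ρ x ∂ν) else ∞

section Aux

variable {X : Type*} [MeasurableSpace X] {p r : Measure X}

lemma aux_lintegral_inv_rnDeriv_le [SigmaFinite p] [IsProbabilityMeasure r]
    (h : p ≪ r) : ∫⁻ x, (p.rnDeriv r x)⁻¹ ∂p ≤ 1 := by
  have hrw : ∫⁻ x, (p.rnDeriv r x)⁻¹ ∂p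
      = ∫⁻ x, (p.rnDeriv r x)⁻¹ ∂(r.withDensity (p.rnDeriv r)) := by
    rw [Measure.withDensity_rnDeriv_eq p r h]
  rw [hrw, lintegral_withDensity_eq_lintegral_mul _ (g := fun x => (p.rnDeriv r x)⁻¹) (Measure.measurable_rnDeriv p r)
    (Measure.measurable_rnDeriv p r).inv]
  calc ∫⁻ x, (p.rnDeriv r * (p.rnDeriv r)⁻¹) x ∂r
      ≤ ∫⁻ _, 1 ∂r := lintegral_mono fun x => ENNReal.mul_inv_le_one _
    _ = 1 := by simp

lemma aux_integrable_inv_rnDeriv [SigmaFinite p] [IsProbabilityMeasure r]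
    (h : p ≪ r) : Integrable (fun x => ((p.rnDeriv r x)⁻¹).toReal) p := by
  refine integrable_toReal_of_lintegral_ne_top
    (Measure.measurable_rnDeriv p r).inv.aemeasurable ?_
  exact ((aux_lintegral_inv_rnDeriv_le h).trans_lt ENNReal.one_lt_top).ne

lemma aux_integral_inv_rnDeriv_le_one [SigmaFinite p] [IsProbabilityMeasure r]
    (h : p ≪ r) : ∫ x, ((p.rnDeriv r x)⁻¹).toReal ∂p ≤ 1 := by
  have hfin : ∀ᵐ x ∂p, (p.rnDeriv r x)⁻¹ < ∞ := by
    filter_upwards [Measure.rnDeriv_pos h] with x hx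
    simp [ENNReal.inv_lt_top, hx]
  rw [integral_toReal (f := fun x => (p.rnDeriv r x)⁻¹) (Measure.measurable_rnDeriv p r).inv.aemeasurable hfin]
  have := aux_lintegral_inv_rnDeriv_le h
  calc (∫⁻ x, (p.rnDeriv r x)⁻¹ ∂p).toReal ≤ (1 : ℝ≥0∞).toReal := by
        exact ENNReal.toReal_mono ENNReal.one_ne_top this
    _ = 1 := by simp

lemma aux_neg_llr_le [SigmaFinite p] [SigmaFinite r]
    (h : p ≪ r) : ∀ᵐ x ∂p, -llr p r x ≤ ((p.rnDeriv r x)⁻¹).toReal - 1 := by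
  filter_upwards [Measure.rnDeriv_pos h, h.ae_le (Measure.rnDeriv_lt_top p r)]
    with x hpos hlt
  have h0 : (p.rnDeriv r x).toReal ≠ 0 := by
    simp [ENNReal.toReal_ne_zero, hpos.ne', hlt.ne]
  have hpos' : 0 < ((p.rnDeriv r x)⁻¹).toReal := by
    rw [ENNReal.toReal_inv]
    positivity
  calc -llr p r x = Real.log ((p.rnDeriv r x).toReal)⁻¹ := by
        rw [llr, Real.log_inv]
    _ = Real.log ((p.rnDeriv r x)⁻¹).toReal := by rw [ENNReal.toReal_inv]
    _ ≤ ((p.rnDeriv r x)⁻¹).toReal - 1 := Real.log_le_sub_one_of_pos hpos'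

lemma aux_integral_llr_nonneg [IsProbabilityMeasure p] [IsProbabilityMeasure r]
    (h : p ≪ r) (hint : Integrable (llr p r) p) : 0 ≤ ∫ x, llr p r x ∂p := by
  have hneg : ∫ x, -llr p r x ∂p ≤ ∫ x, (((p.rnDeriv r x)⁻¹).toReal - 1) ∂p := by
    refine integral_mono_ae hint.neg ((aux_integrable_inv_rnDeriv h).sub
      (integrable_const 1)) (aux_neg_llr_le h)
  rw [integral_neg] at hneg
  have h2 : ∫ x, (((p.rnDeriv r x)⁻¹).toReal - 1) ∂p ≤ 0 := by
    rw [integral_sub (aux_integrable_inv_rnDeriv h) (integrable_const 1)]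
    have := aux_integral_inv_rnDeriv_le_one h
    simp only [integral_const, measure_univ, ENNReal.toReal_one, probReal_univ, one_smul, smul_eq_mul]
    linarith
  linarith

end Aux

section CompProd

variable {Φ H : Type*} [MeasurableSpace Φ] [MeasurableSpace H]

lemma aux_compProd_withDensity (ν : Measure Φ) [SFinite ν]
    (κ : ProbabilityTheory.Kernel Φ H) [ProbabilityTheory.IsSFiniteKernel κ]
    {g : Φ → ℝ≥0∞} (hg : Measurable g) [SFinite (ν.withDensity g)] :
    (ν.withDensity g) ⊗ₘ κ = (ν ⊗ₘ κ).withDensity (fun x => g x.1) := by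
  refine Measure.ext fun s hs => ?_
  rw [Measure.compProd_apply hs, withDensity_apply _ hs,
    lintegral_withDensity_eq_lintegral_mul _ hg
      (ProbabilityTheory.Kernel.measurable_kernel_prodMk_left hs),
    ← lintegral_indicator hs, Measure.lintegral_compProd
      ((show Measurable fun x : Φ × H => g x.1 from hg.comp measurable_fst).indicator hs)]
  refine lintegral_congr fun φ => ?_
  simp only [Pi.mul_apply]
  have : ∀ η, s.indicator (fun x : Φ × H => g x.1) (φ, η)
      = (Prod.mk φ ⁻¹' s).indicator (fun _ => g φ) η := by
    intro η
    by_cases hη : (φ, η) ∈ s <;> simp [Set.indicator, hη, Set.mem_preimage]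
  simp_rw [this]
  rw [lintegral_indicator (measurable_prodMk_left hs), setLIntegral_const]

end CompProd

/-- Lemma 1(a): the cut posterior `π_cut = μ ⊗ₘ π.condKernel` minimizes the KL divergence to the
full posterior `π` over all joint probability measures `q` whose first marginal is `μ`. -/
theorem cut_posterior_minimizes_kl
    {Φ H : Type*} [MeasurableSpace Φ] [StandardBorelSpace Φ]
    [MeasurableSpace H] [StandardBorelSpace H] [Nonempty H]
    (π : Measure (Φ × H)) [IsProbabilityMeasure π]
    (μ : Measure Φ) [IsProbabilityMeasure μ]
    (q : Measure (Φ × H)) [IsProbabilityMeasure q]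
    (hq : q.fst = μ) :
    klDiv (μ ⊗ₘ π.condKernel) π ≤ klDiv q π := by
  by_cases hcase : q ≪ π ∧ Integrable (llr q π) q
  swap
  · have : klDiv q π = ∞ := by rw [klDiv, if_neg hcase]
    rw [this]; exact le_top
  obtain ⟨hqπ, hint⟩ := hcase
  set κ := π.condKernel
  set ν := π.fst
  have hπ : ν ⊗ₘ κ = π := π.disintegrate π.condKernel
  -- marginal absolute continuity
  have hμν : μ ≪ ν := by
    rw [← hq]
    exact hqπ.map measurable_fst
  set g : Φ → ℝ≥0∞ := μ.rnDeriv ν with hg_def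
  have hg : Measurable g := Measure.measurable_rnDeriv μ ν
  -- μ ⊗ₘ κ as a density against π
  have hwd : μ ⊗ₘ κ = π.withDensity (fun x => g x.1) := by
    conv_lhs => rw [← Measure.withDensity_rnDeriv_eq μ ν hμν]
    rw [aux_compProd_withDensity ν κ hg, hπ]
  have hμκπ : μ ⊗ₘ κ ≪ π := by
    rw [← hπ]
    exact hμν.compProd_left κ
  -- transfer a.e.[μ] facts to a.e.[q] through fst
  have hmap : q.map Prod.fst = μ := hq
  have key : ∀ (m : Measure (Φ × H)), m.map Prod.fst = μ → ∀ f : Φ → ℝ, StronglyMeasurable f →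
      (Integrable (fun x => f x.1) m ↔ Integrable f μ) ∧ (∫ x, f x.1 ∂m = ∫ φ, f φ ∂μ) := by
    intro m hm f hf
    constructor
    · rw [← hm]
      exact (integrable_map_measure hf.aestronglyMeasurable measurable_fst.aemeasurable).symm
    · rw [← hm]
      exact (integral_map measurable_fst.aemeasurable hf.aestronglyMeasurable).symm
  have h_ae_fst : ∀ {P : Φ → Prop}, (∀ᵐ φ ∂μ, P φ) → ∀ᵐ x ∂q, P x.1 := by
    intro P hP
    rw [← hmap] at hP
    exact ae_of_ae_map measurable_fst.aemeasurable hP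
  -- g positive and finite a.e. q
  have hg_pos_q : ∀ᵐ x ∂q, 0 < g x.1 := h_ae_fst (Measure.rnDeriv_pos hμν)
  have hg_fin_q : ∀ᵐ x ∂q, g x.1 < ∞ := h_ae_fst (hμν.ae_le (Measure.rnDeriv_lt_top μ ν))
  -- q ≪ μ ⊗ₘ κ
  have hqμκ : q ≪ μ ⊗ₘ κ := by
    refine Measure.AbsolutelyContinuous.mk fun s hs hs0 => ?_
    rw [hwd, withDensity_apply _ hs] at hs0
    have h0 : ∀ᵐ x ∂π.restrict s, g x.1 = 0 :=
      (lintegral_eq_zero_iff (hg.comp measurable_fst)).mp hs0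
    have h0' : ∀ᵐ x ∂π, x ∈ s → g x.1 = 0 :=
      (ae_restrict_iff' hs).mp h0
    have h0q : ∀ᵐ x ∂q, x ∈ s → g x.1 = 0 := hqπ.ae_le h0'
    have : ∀ᵐ x ∂q, x ∉ s := by
      filter_upwards [h0q, hg_pos_q] with x hx hpos
      intro hxs
      exact absurd (hx hxs) hpos.ne'
    exact measure_eq_zero_iff_ae_notMem.mpr this
  -- rnDeriv of μ ⊗ₘ κ w.r.t. π is g ∘ fst
  have hrn_g : (μ ⊗ₘ κ).rnDeriv π =ᵐ[π] fun x => g x.1 := by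
    rw [hwd]
    exact Measure.rnDeriv_withDensity π (hg.comp measurable_fst)
  -- chain rule for rnDeriv, a.e. q
  have hchain : ∀ᵐ x ∂q, q.rnDeriv π x = q.rnDeriv (μ ⊗ₘ κ) x * g x.1 := by
    have h1 : q.rnDeriv (μ ⊗ₘ κ) * (μ ⊗ₘ κ).rnDeriv π =ᵐ[π] q.rnDeriv π :=
      Measure.rnDeriv_mul_rnDeriv hqμκ
    filter_upwards [hqπ.ae_le h1, hqπ.ae_le hrn_g] with x h1x h2x
    rw [← h1x, Pi.mul_apply, h2x]
  -- llr decomposition a.e. q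
  have hBpos : ∀ᵐ x ∂q, 0 < q.rnDeriv (μ ⊗ₘ κ) x := Measure.rnDeriv_pos hqμκ
  have hBfin : ∀ᵐ x ∂q, q.rnDeriv (μ ⊗ₘ κ) x < ∞ :=
    hqμκ.ae_le (Measure.rnDeriv_lt_top q (μ ⊗ₘ κ))
  set A : Φ × H → ℝ := fun x => llr μ ν x.1 with hA_def
  set B : Φ × H → ℝ := llr q (μ ⊗ₘ κ) with hB_def
  have hdecomp : ∀ᵐ x ∂q, llr q π x = B x + A x := by
    filter_upwards [hchain, hBpos, hBfin, hg_pos_q, hg_fin_q] with x hx hBp hBf hgp hgf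
    have hB0 : (q.rnDeriv (μ ⊗ₘ κ) x).toReal ≠ 0 := by
      simp [ENNReal.toReal_ne_zero, hBp.ne', hBf.ne]
    have hg0 : (g x.1).toReal ≠ 0 := by
      simp [ENNReal.toReal_ne_zero, hgp.ne', hgf.ne]
    rw [llr, hx, ENNReal.toReal_mul, Real.log_mul hB0 hg0]
    rfl
  -- dominating functions
  set C : Φ × H → ℝ := fun x => ((q.rnDeriv (μ ⊗ₘ κ) x)⁻¹).toReal with hC_def
  have hC_int : Integrable C q := aux_integrable_inv_rnDeriv hqμκ
  set D : Φ → ℝ := fun φ => ((μ.rnDeriv ν φ)⁻¹).toReal with hD_def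
  have hD_int_μ : Integrable D μ := aux_integrable_inv_rnDeriv hμν
  have hD_meas : StronglyMeasurable D :=
    ((Measure.measurable_rnDeriv μ ν).inv.ennreal_toReal).stronglyMeasurable
  have hD_int : Integrable (fun x : Φ × H => D x.1) q :=
    ((key q hmap D hD_meas).1).mpr hD_int_μ
  have hnegB : ∀ᵐ x ∂q, -B x ≤ C x - 1 := aux_neg_llr_le hqμκ
  have hnegA : ∀ᵐ x ∂q, -A x ≤ D x.1 - 1 := h_ae_fst (aux_neg_llr_le hμν)
  -- A is integrable w.r.t. q
  have hA_meas : AEStronglyMeasurable A q :=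
    ((measurable_llr μ ν).comp measurable_fst).aestronglyMeasurable
  have hA_int : Integrable A q := by
    refine Integrable.mono' ((hint.abs.add hC_int.abs).add hD_int.abs) hA_meas ?_
    filter_upwards [hdecomp, hnegB, hnegA] with x hx hB hA
    have h1 := abs_nonneg (llr q π x)
    have h2 := abs_nonneg (C x)
    have h3 := le_abs_self (llr q π x)
    have h5 := le_abs_self (C x)
    have h6 := le_abs_self (D x.1)
    have h7 := abs_nonneg (D x.1)
    rw [Real.norm_eq_abs, abs_le]
    constructor <;> [skip; skip] <;> simp only [Pi.add_apply] <;> linarith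
  -- B is integrable w.r.t. q
  have hB_int : Integrable B q := by
    have : Integrable (fun x => llr q π x - A x) q := hint.sub hA_int
    refine this.congr ?_
    filter_upwards [hdecomp] with x hx
    rw [hx]; ring
  -- split the integral
  have hsplit : ∫ x, llr q π x ∂q = ∫ x, B x ∂q + ∫ x, A x ∂q := by
    rw [← integral_add hB_int hA_int]
    exact integral_congr_ae hdecomp
  have hB_nonneg : 0 ≤ ∫ x, B x ∂q := aux_integral_llr_nonneg hqμκ hB_int
  -- ∫ A dq = ∫ llr μ ν dμ
  have hA_eq : ∫ x, A x ∂q = ∫ φ, llr μ ν φ ∂μ :=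
    (key q hmap (llr μ ν) (stronglyMeasurable_llr μ ν)).2
  have hllr_int_μ : Integrable (llr μ ν) μ :=
    ((key q hmap (llr μ ν) (stronglyMeasurable_llr μ ν)).1).mp hA_int
  -- llr (μ ⊗ₘ κ) π equals A a.e. (μ ⊗ₘ κ)
  have hllr_μκ : llr (μ ⊗ₘ κ) π =ᵐ[μ ⊗ₘ κ] A := by
    filter_upwards [hμκπ.ae_le hrn_g] with x hx
    rw [llr, hx]
    rfl
  -- integrability of A w.r.t. μ ⊗ₘ κ
  have hfst_μκ : (μ ⊗ₘ κ).map Prod.fst = μ := by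
    have : (μ ⊗ₘ κ).fst = μ := Measure.fst_compProd μ κ
    exact this
  have hA_int_μκ : Integrable A (μ ⊗ₘ κ) :=
    ((key (μ ⊗ₘ κ) hfst_μκ (llr μ ν) (stronglyMeasurable_llr μ ν)).1).mpr hllr_int_μ
  have hA_eq_μκ : ∫ x, A x ∂(μ ⊗ₘ κ) = ∫ φ, llr μ ν φ ∂μ :=
    (key (μ ⊗ₘ κ) hfst_μκ (llr μ ν) (stronglyMeasurable_llr μ ν)).2
  -- conclude
  have hklμκ : klDiv (μ ⊗ₘ κ) π = ENNReal.ofReal (∫ φ, llr μ ν φ ∂μ) := by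
    rw [klDiv, if_pos ⟨hμκπ, (hA_int_μκ.congr hllr_μκ.symm)⟩]
    congr 1
    rw [integral_congr_ae hllr_μκ, hA_eq_μκ]
  rw [hklμκ, klDiv, if_pos ⟨hqπ, hint⟩]
  refine ENNReal.ofReal_le_ofReal ?_
  rw [hsplit, ← hA_eq]
  linarith
end

section
/- Value of the constrained minimum in Lemma 1(a): for every probability measure q ∈ F_cut, KL(q ‖ π) = KL(μ ‖ π.fst) + ∫_Φ KL(q(·|φ) ‖ π(·|φ)) dμ(φ); in particular the minimum of KL(q ‖ π) over q ∈ F_cut equals KL(μ ‖ π.fst) and is attained at the cut posterior: KL(π_cut ‖ π) = KL(μ ‖ π.fst). -/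
open MeasureTheory ProbabilityTheory
open scoped ENNReal NNReal Classical

namespace KLAux

variable {α : Type*} {mα : MeasurableSpace α} {μ ν : Measure α}

lemma klDiv_of_not_ac (h : ¬ μ ≪ ν) : klDiv μ ν = ∞ := by
  rw [klDiv, if_neg (fun hc => h hc.1)]

lemma klDiv_of_not_integrable (h : ¬ Integrable (llr μ ν) μ) : klDiv μ ν = ∞ := by
  rw [klDiv, if_neg (fun hc => h hc.2)]

lemma klDiv_of_ac_of_integrable (h1 : μ ≪ ν) (h2 : Integrable (llr μ ν) μ) :
    klDiv μ ν = ENNReal.ofReal (∫ x, llr μ ν x ∂μ) := by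
  rw [klDiv, if_pos ⟨h1, h2⟩]

lemma ofReal_abs_split (a : ℝ) :
    ENNReal.ofReal |a| = ENNReal.ofReal a + ENNReal.ofReal (-a) := by
  rcases le_total a 0 with h | h
  · rw [ENNReal.ofReal_of_nonpos h, zero_add, abs_of_nonpos h]
  · rw [ENNReal.ofReal_of_nonpos (neg_nonpos.mpr h), add_zero, abs_of_nonneg h]

lemma integrable_iff_ofReal {f : α → ℝ} (hf : Measurable f) :
    Integrable f μ ↔ (∫⁻ x, ENNReal.ofReal (f x) ∂μ < ∞ ∧ ∫⁻ x, ENNReal.ofReal (-f x) ∂μ < ∞) := by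
  have key : ∫⁻ x, ENNReal.ofReal ‖f x‖ ∂μ
      = ∫⁻ x, ENNReal.ofReal (f x) ∂μ + ∫⁻ x, ENNReal.ofReal (-f x) ∂μ := by
    rw [← lintegral_add_left hf.ennreal_ofReal]
    refine lintegral_congr fun x => ?_
    rw [Real.norm_eq_abs, ofReal_abs_split]
  constructor
  · intro h
    have h2 := (hasFiniteIntegral_iff_norm f).mp h.2
    rw [key] at h2
    exact ⟨(ENNReal.add_lt_top.mp h2).1, (ENNReal.add_lt_top.mp h2).2⟩
  · intro h
    refine ⟨hf.aestronglyMeasurable, ?_⟩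
    rw [hasFiniteIntegral_iff_norm, key]
    exact ENNReal.add_lt_top.mpr h

lemma lintegral_ofReal_neg_llr_le [IsProbabilityMeasure μ] [IsProbabilityMeasure ν]
    (h : μ ≪ ν) : ∫⁻ x, ENNReal.ofReal (- llr μ ν x) ∂μ ≤ 1 := by
  have h1 : ∫⁻ x, ENNReal.ofReal (- llr μ ν x) ∂μ = ∫⁻ x, ENNReal.ofReal (llr ν μ x) ∂μ :=
    lintegral_congr_ae ((neg_llr h).mono fun x hx => by
      rw [Pi.neg_apply] at hx; dsimp only; rw [hx])
  rw [h1]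
  calc ∫⁻ x, ENNReal.ofReal (llr ν μ x) ∂μ ≤ ∫⁻ x, ν.rnDeriv μ x ∂μ := by
        refine lintegral_mono fun x => ?_
        rcases eq_or_lt_of_le (ENNReal.toReal_nonneg : 0 ≤ (ν.rnDeriv μ x).toReal) with h0 | h0
        · simp [llr, ← h0]
        · exact le_trans (ENNReal.ofReal_le_ofReal
            ((Real.log_le_sub_one_of_pos h0).trans (by linarith)))
            ENNReal.ofReal_toReal_le
    _ ≤ ν Set.univ := Measure.lintegral_rnDeriv_le
    _ = 1 := measure_univ

lemma integrable_llr_iff [IsProbabilityMeasure μ] [IsProbabilityMeasure ν] (h : μ ≪ ν) :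
    Integrable (llr μ ν) μ ↔ ∫⁻ x, ENNReal.ofReal (llr μ ν x) ∂μ < ∞ := by
  rw [integrable_iff_ofReal (measurable_llr μ ν)]
  exact ⟨fun hh => hh.1, fun hh => ⟨hh, (lintegral_ofReal_neg_llr_le h).trans_lt ENNReal.one_lt_top⟩⟩

lemma integral_llr_nonneg [IsProbabilityMeasure μ] [IsProbabilityMeasure ν]
    (h : μ ≪ ν) (hint : Integrable (llr μ ν) μ) : 0 ≤ ∫ x, llr μ ν x ∂μ := by
  have hint' : Integrable (llr ν μ) μ := (integrable_congr (neg_llr h)).mp hint.neg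
  have h1 : ∫ x, llr μ ν x ∂μ = - ∫ x, llr ν μ x ∂μ := by
    have h1' := integral_congr_ae (neg_llr h)
    simp only [Pi.neg_apply] at h1'
    rw [integral_neg] at h1'
    linarith
  have h2 : ∫ x, llr ν μ x ∂μ ≤ ∫ x, ((ν.rnDeriv μ x).toReal - 1) ∂μ := by
    refine integral_mono_ae hint' (Measure.integrable_toReal_rnDeriv.sub (integrable_const 1)) ?_
    filter_upwards [Measure.rnDeriv_pos' h, Measure.rnDeriv_lt_top ν μ] with x h0 hlt
    exact Real.log_le_sub_one_of_pos (ENNReal.toReal_pos h0.ne' hlt.ne)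
  have h3 : ∫ x, ((ν.rnDeriv μ x).toReal - 1) ∂μ ≤ 0 := by
    rw [integral_sub Measure.integrable_toReal_rnDeriv (integrable_const 1)]
    simp only [integral_const, measure_univ, probReal_univ, ENNReal.toReal_one, smul_eq_mul, one_mul]
    have h4 : ∫ x, (ν.rnDeriv μ x).toReal ∂μ ≤ (ν Set.univ).toReal := by
      rw [← setIntegral_univ]
      exact Measure.setIntegral_toReal_rnDeriv_le (measure_ne_top ν _)
    simp only [measure_univ, ENNReal.toReal_one] at h4
    linarith
  rw [h1]
  linarith

lemma klDiv_self (τ : Measure α) [IsProbabilityMeasure τ] : klDiv τ τ = 0 := by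
  have h0 : llr τ τ =ᵐ[τ] 0 := by
    filter_upwards [Measure.rnDeriv_self τ] with x hx
    simp [llr, hx]
  rw [klDiv_of_ac_of_integrable Measure.AbsolutelyContinuous.rfl
    ((integrable_congr h0).mpr (integrable_zero _ _ _)), integral_congr_ae h0]
  simp

lemma lintegral_ofReal_llr_le_klDiv_add_one [IsProbabilityMeasure μ] [IsProbabilityMeasure ν] :
    ∫⁻ x, ENNReal.ofReal (llr μ ν x) ∂μ ≤ klDiv μ ν + 1 := by
  by_cases hac : μ ≪ ν
  swap
  · rw [klDiv_of_not_ac hac]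
    exact le_top.trans (by simp)
  by_cases hint : Integrable (llr μ ν) μ
  swap
  · rw [klDiv_of_not_integrable hint]
    exact le_top.trans (by simp)
  set P := ∫⁻ x, ENNReal.ofReal (llr μ ν x) ∂μ with hP
  set N := ∫⁻ x, ENNReal.ofReal (-llr μ ν x) ∂μ with hN
  have hPfin : P < ∞ := ((integrable_iff_ofReal (measurable_llr μ ν)).mp hint).1
  have hNfin : N < ∞ := ((integrable_iff_ofReal (measurable_llr μ ν)).mp hint).2
  have heq : ∫ x, llr μ ν x ∂μ = P.toReal - N.toReal :=
    integral_eq_lintegral_pos_part_sub_lintegral_neg_part hint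
  have hPval : P.toReal = ∫ x, llr μ ν x ∂μ + N.toReal := by rw [heq]; ring
  calc P = ENNReal.ofReal P.toReal := (ENNReal.ofReal_toReal hPfin.ne).symm
    _ = ENNReal.ofReal (∫ x, llr μ ν x ∂μ + N.toReal) := by rw [hPval]
    _ ≤ ENNReal.ofReal (∫ x, llr μ ν x ∂μ) + ENNReal.ofReal N.toReal := ENNReal.ofReal_add_le
    _ = klDiv μ ν + N := by
        rw [klDiv_of_ac_of_integrable hac hint, ENNReal.ofReal_toReal hNfin.ne]
    _ ≤ klDiv μ ν + 1 := by
        gcongr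
        exact lintegral_ofReal_neg_llr_le hac

section CompProd

variable {Φ H : Type*} [MeasurableSpace Φ] [MeasurableSpace H]
  [MeasurableSpace.CountablyGenerated H]

lemma ac_fst (μ ν : Measure Φ) [IsProbabilityMeasure μ] [IsProbabilityMeasure ν]
    (κ η : Kernel Φ H) [IsMarkovKernel κ] [IsMarkovKernel η]
    (hq : μ ⊗ₘ κ ≪ ν ⊗ₘ η) : μ ≪ ν := by
  refine Measure.AbsolutelyContinuous.mk fun s hs hνs => ?_
  have hπ : (ν ⊗ₘ η) (s ×ˢ Set.univ) = 0 := by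
    rw [Measure.compProd_apply_prod hs MeasurableSet.univ]
    simp only [measure_univ, lintegral_one, Measure.restrict_apply MeasurableSet.univ,
      Set.univ_inter]
    exact hνs
  have hqs := hq hπ
  rw [Measure.compProd_apply_prod hs MeasurableSet.univ] at hqs
  simpa only [measure_univ, lintegral_one, Measure.restrict_apply MeasurableSet.univ,
    Set.univ_inter] using hqs

lemma ac_kernel (μ ν : Measure Φ) [IsProbabilityMeasure μ] [IsProbabilityMeasure ν]
    (κ η : Kernel Φ H) [IsMarkovKernel κ] [IsMarkovKernel η]
    (hq : μ ⊗ₘ κ ≪ ν ⊗ₘ η) : ∀ᵐ φ ∂μ, κ φ ≪ η φ := by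
  have hslice : ∀ φ, Prod.mk φ ⁻¹' Kernel.mutuallySingularSet κ η
      = Kernel.mutuallySingularSetSlice κ η φ := fun φ => rfl
  have hπt : (ν ⊗ₘ η) (Kernel.mutuallySingularSet κ η) = 0 := by
    rw [Measure.compProd_apply (Kernel.measurableSet_mutuallySingularSet κ η)]
    have : ∀ φ, η φ (Prod.mk φ ⁻¹' Kernel.mutuallySingularSet κ η) = 0 := fun φ => by
      rw [hslice]
      exact Kernel.measure_mutuallySingularSetSlice κ η φ
    simp [this]
  have hqt := hq hπt
  rw [Measure.compProd_apply (Kernel.measurableSet_mutuallySingularSet κ η)] at hqt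
  have h0 := (lintegral_eq_zero_iff
    (Kernel.measurable_kernel_prodMk_left (Kernel.measurableSet_mutuallySingularSet κ η))).mp hqt
  filter_upwards [h0] with φ hφ
  rw [← Kernel.singularPart_eq_zero_iff_absolutelyContinuous,
    Kernel.singularPart_eq_zero_iff_measure_eq_zero]
  rw [Pi.zero_apply] at hφ
  rw [← hslice]
  exact hφ

lemma compProd_eq_withDensity (μ ν : Measure Φ) [IsProbabilityMeasure μ] [IsProbabilityMeasure ν]
    (κ η : Kernel Φ H) [IsMarkovKernel κ] [IsMarkovKernel η]
    (h1 : μ ≪ ν) (h2 : ∀ᵐ φ ∂μ, κ φ ≪ η φ) :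
    μ ⊗ₘ κ = (ν ⊗ₘ η).withDensity
      (fun p => μ.rnDeriv ν p.1 * Kernel.rnDeriv κ η p.1 p.2) := by
  have hR : Measurable fun p : Φ × H => Kernel.rnDeriv κ η p.1 p.2 :=
    Kernel.measurable_rnDeriv κ η
  have hf : Measurable fun p : Φ × H => μ.rnDeriv ν p.1 * Kernel.rnDeriv κ η p.1 p.2 :=
    ((μ.measurable_rnDeriv ν).comp measurable_fst).mul hR
  have hκη : μ ⊗ₘ κ = μ ⊗ₘ (Kernel.withDensity η (Kernel.rnDeriv κ η)) := by
    refine Measure.compProd_congr ?_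
    filter_upwards [h2] with φ hφ
    exact (Kernel.withDensity_rnDeriv_eq hφ).symm
  ext s hs
  rw [hκη, Measure.compProd_apply hs, withDensity_apply _ hs]
  have hwd : ∀ φ, Kernel.withDensity η (Kernel.rnDeriv κ η) φ (Prod.mk φ ⁻¹' s)
      = ∫⁻ h in Prod.mk φ ⁻¹' s, Kernel.rnDeriv κ η φ h ∂η φ := fun φ =>
    Kernel.withDensity_apply' η (Kernel.measurable_rnDeriv κ η) φ (Prod.mk φ ⁻¹' s)
  -- left side
  have hmeasF : Measurable fun φ =>
      Kernel.withDensity η (Kernel.rnDeriv κ η) φ (Prod.mk φ ⁻¹' s) :=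
    Kernel.measurable_kernel_prodMk_left hs
  have hL : ∫⁻ φ, Kernel.withDensity η (Kernel.rnDeriv κ η) φ (Prod.mk φ ⁻¹' s) ∂μ
      = ∫⁻ φ, μ.rnDeriv ν φ *
          (∫⁻ h in Prod.mk φ ⁻¹' s, Kernel.rnDeriv κ η φ h ∂η φ) ∂ν := by
    conv_lhs => rw [← Measure.withDensity_rnDeriv_eq μ ν h1]
    rw [lintegral_withDensity_eq_lintegral_mul _ (μ.measurable_rnDeriv ν) hmeasF]
    refine lintegral_congr fun φ => ?_
    simp only [Pi.mul_apply]
    rw [hwd]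
  rw [hL]
  -- right side
  rw [← lintegral_indicator hs, Measure.lintegral_compProd (hf.indicator hs)]
  refine lintegral_congr fun φ => ?_
  rw [← lintegral_const_mul _ (Kernel.measurable_rnDeriv_right κ η φ)]
  rw [← lintegral_indicator (measurable_prodMk_left hs)]
  refine lintegral_congr fun h => ?_
  by_cases hmem : (φ, h) ∈ s
  · rw [Set.indicator_of_mem hmem, Set.indicator_of_mem (by exact hmem)]
  · rw [Set.indicator_of_notMem hmem, Set.indicator_of_notMem (by exact hmem)]

end CompProd

section Chain

variable {Φ H : Type*} [MeasurableSpace Φ] [MeasurableSpace H]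
  [MeasurableSpace.CountablyGenerated H]

variable {Φ H : Type*} [MeasurableSpace Φ] [MeasurableSpace H] in
lemma lintegral_fst_aux (ρ : Measure (Φ × H)) {f : Φ → ℝ≥0∞} (hf : Measurable f) :
    ∫⁻ p, f p.1 ∂ρ = ∫⁻ φ, f φ ∂ρ.fst := by
  rw [Measure.fst, lintegral_map hf measurable_fst]

variable {Φ H : Type*} [MeasurableSpace Φ] [MeasurableSpace H] in
lemma integral_fst_aux (ρ : Measure (Φ × H)) {f : Φ → ℝ} (hf : AEStronglyMeasurable f ρ.fst) :
    ∫ p, f p.1 ∂ρ = ∫ φ, f φ ∂ρ.fst := by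
  rw [Measure.fst] at hf ⊢
  rw [integral_map measurable_fst.aemeasurable hf]

variable {Φ H : Type*} [MeasurableSpace Φ] [MeasurableSpace H] in
lemma ae_fst_aux (ρ : Measure (Φ × H)) {P : Φ → Prop} (h : ∀ᵐ φ ∂ρ.fst, P φ) :
    ∀ᵐ p ∂ρ, P p.1 := by
  rw [Measure.fst] at h
  exact ae_of_ae_map measurable_fst.aemeasurable h

lemma klDiv_compProd (μ ν : Measure Φ) [IsProbabilityMeasure μ] [IsProbabilityMeasure ν]
    (κ η : Kernel Φ H) [IsMarkovKernel κ] [IsMarkovKernel η] :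
    klDiv (μ ⊗ₘ κ) (ν ⊗ₘ η) = klDiv μ ν + ∫⁻ φ, klDiv (κ φ) (η φ) ∂μ := by
  haveI : IsProbabilityMeasure (μ ⊗ₘ κ) :=
    ⟨by rw [Measure.compProd_apply_univ]; exact measure_univ⟩
  haveI : IsProbabilityMeasure (ν ⊗ₘ η) :=
    ⟨by rw [Measure.compProd_apply_univ]; exact measure_univ⟩
  by_cases hac : (μ ⊗ₘ κ) ≪ (ν ⊗ₘ η)
  swap
  · rw [klDiv_of_not_ac hac]
    by_cases h1 : μ ≪ ν
    swap
    · rw [klDiv_of_not_ac h1, top_add]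
    have h2 : ¬ ∀ᵐ φ ∂μ, κ φ ≪ η φ := fun h2 =>
      hac (Measure.AbsolutelyContinuous.compProd h1 h2)
    have hmeas : MeasurableSet {φ | κ φ ≪ η φ} := Kernel.measurableSet_absolutelyContinuous κ η
    have hpos : μ {φ | ¬ κ φ ≪ η φ} ≠ 0 := by
      intro hzero
      exact h2 (ae_iff.mpr hzero)
    have htop : ∫⁻ φ, klDiv (κ φ) (η φ) ∂μ = ∞ := by
      refine eq_top_iff.mpr ?_
      have hcompl : {φ | ¬ κ φ ≪ η φ} = {φ | κ φ ≪ η φ}ᶜ := rfl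
      calc (⊤:ℝ≥0∞) = ∞ * μ {φ | ¬ κ φ ≪ η φ} := (ENNReal.top_mul hpos).symm
        _ = ∫⁻ _ in {φ | ¬ κ φ ≪ η φ}, ∞ ∂μ := by rw [setLIntegral_const, mul_comm]
        _ ≤ ∫⁻ φ in {φ | ¬ κ φ ≪ η φ}, klDiv (κ φ) (η φ) ∂μ := by
            rw [hcompl]
            refine setLIntegral_mono' hmeas.compl fun φ hφ => ?_
            rw [klDiv_of_not_ac hφ]
        _ ≤ ∫⁻ φ, klDiv (κ φ) (η φ) ∂μ := setLIntegral_le_lintegral _ _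
    rw [htop, add_top]
  -- positive case
  have h1 : μ ≪ ν := ac_fst μ ν κ η hac
  have h2 : ∀ᵐ φ ∂μ, κ φ ≪ η φ := ac_kernel μ ν κ η hac
  have hfst : (μ ⊗ₘ κ).fst = μ := Measure.fst_compProd μ κ
  have hR : Measurable fun p : Φ × H => Kernel.rnDeriv κ η p.1 p.2 :=
    Kernel.measurable_rnDeriv κ η
  have hf : Measurable fun p : Φ × H => μ.rnDeriv ν p.1 * Kernel.rnDeriv κ η p.1 p.2 :=
    ((μ.measurable_rnDeriv ν).comp measurable_fst).mul hR
  have hrn : (μ ⊗ₘ κ).rnDeriv (ν ⊗ₘ η)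
      =ᵐ[ν ⊗ₘ η] fun p => μ.rnDeriv ν p.1 * Kernel.rnDeriv κ η p.1 p.2 := by
    conv_lhs => rw [compProd_eq_withDensity μ ν κ η h1 h2]
    exact Measure.rnDeriv_withDensity _ hf
  have hrnq := hac.ae_le hrn
  have hg_q : ∀ᵐ p ∂(μ ⊗ₘ κ), 0 < μ.rnDeriv ν p.1 ∧ μ.rnDeriv ν p.1 < ∞ := by
    refine ae_fst_aux (μ ⊗ₘ κ) (P := fun φ => 0 < μ.rnDeriv ν φ ∧ μ.rnDeriv ν φ < ∞) ?_
    rw [hfst]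
    exact (Measure.rnDeriv_pos h1).and (h1.ae_le (μ.rnDeriv_lt_top ν))
  have hR_q : ∀ᵐ p ∂(μ ⊗ₘ κ),
      0 < Kernel.rnDeriv κ η p.1 p.2 ∧ Kernel.rnDeriv κ η p.1 p.2 < ∞ := by
    refine Measure.ae_compProd_of_ae_ae
      (p := fun p => 0 < Kernel.rnDeriv κ η p.1 p.2 ∧ Kernel.rnDeriv κ η p.1 p.2 < ∞) ?_ ?_
    · exact hR measurableSet_Ioo
    · filter_upwards [h2] with φ hφ
      exact (Kernel.rnDeriv_pos hφ).and (hφ.ae_le (Kernel.rnDeriv_lt_top κ η))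
  set L2 : Φ × H → ℝ := fun p => Real.log (Kernel.rnDeriv κ η p.1 p.2).toReal with hL2
  have hL2meas : Measurable L2 := hR.ennreal_toReal.log
  have hL1meas : Measurable fun p : Φ × H => llr μ ν p.1 :=
    (measurable_llr μ ν).comp measurable_fst
  have hllr_eq : llr (μ ⊗ₘ κ) (ν ⊗ₘ η) =ᵐ[μ ⊗ₘ κ] fun p => llr μ ν p.1 + L2 p := by
    filter_upwards [hrnq, hg_q, hR_q] with p h0 hg hr
    rw [llr, h0, ENNReal.toReal_mul,
      Real.log_mul (ENNReal.toReal_pos hg.1.ne' hg.2.ne).ne'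
        (ENNReal.toReal_pos hr.1.ne' hr.2.ne).ne']
    rfl
  have hinner : ∀ᵐ φ ∂μ, (fun h => L2 (φ, h)) =ᵐ[κ φ] llr (κ φ) (η φ) := by
    filter_upwards [h2] with φ hφ
    filter_upwards [hφ.ae_le (Kernel.rnDeriv_eq_rnDeriv_measure (κ := κ) (η := η) (a := φ))]
      with h hh
    simp only [hL2, llr]
    rw [hh]
  have hnegL2 : ∫⁻ p, ENNReal.ofReal (-(L2 p)) ∂(μ ⊗ₘ κ) ≤ 1 := by
    rw [Measure.lintegral_compProd (f := fun p => ENNReal.ofReal (-(L2 p))) hL2meas.neg.ennreal_ofReal]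
    calc ∫⁻ φ, ∫⁻ h, ENNReal.ofReal (-(L2 (φ, h))) ∂κ φ ∂μ ≤ ∫⁻ _, 1 ∂μ := by
          refine lintegral_mono_ae ?_
          filter_upwards [h2, hinner] with φ hφ hin
          calc ∫⁻ h, ENNReal.ofReal (-(L2 (φ, h))) ∂κ φ
              = ∫⁻ h, ENNReal.ofReal (- llr (κ φ) (η φ) h) ∂κ φ := by
                refine lintegral_congr_ae ?_
                filter_upwards [hin] with h hh
                rw [hh]
            _ ≤ 1 := lintegral_ofReal_neg_llr_le hφ
      _ = 1 := by simp
  have hnegL1 : ∫⁻ p, ENNReal.ofReal (-(llr μ ν p.1)) ∂(μ ⊗ₘ κ) ≤ 1 := by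
    rw [lintegral_fst_aux _ (f := fun φ => ENNReal.ofReal (-(llr μ ν φ))) (measurable_llr μ ν).neg.ennreal_ofReal, hfst]
    exact lintegral_ofReal_neg_llr_le h1
  have hposL1 : ∫⁻ p, ENNReal.ofReal (llr μ ν p.1) ∂(μ ⊗ₘ κ)
      = ∫⁻ φ, ENNReal.ofReal (llr μ ν φ) ∂μ := by
    rw [lintegral_fst_aux _ (measurable_llr μ ν).ennreal_ofReal, hfst]
  by_cases hint : Integrable (llr (μ ⊗ₘ κ) (ν ⊗ₘ η)) (μ ⊗ₘ κ)
  · have hint_pos : ∫⁻ p, ENNReal.ofReal (llr (μ ⊗ₘ κ) (ν ⊗ₘ η) p) ∂(μ ⊗ₘ κ) < ∞ :=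
      ((integrable_iff_ofReal (measurable_llr _ _)).mp hint).1
    have key : ∀ (F G : Φ × H → ℝ), Measurable F →
        (llr (μ ⊗ₘ κ) (ν ⊗ₘ η) =ᵐ[μ ⊗ₘ κ] fun p => F p + G p) →
        (∫⁻ p, ENNReal.ofReal (-(G p)) ∂(μ ⊗ₘ κ) ≤ 1) →
        ∫⁻ p, ENNReal.ofReal (F p) ∂(μ ⊗ₘ κ) < ∞ := by
      intro F G hF heq hneg
      calc ∫⁻ p, ENNReal.ofReal (F p) ∂(μ ⊗ₘ κ)
          ≤ ∫⁻ p, (ENNReal.ofReal (llr (μ ⊗ₘ κ) (ν ⊗ₘ η) p) + ENNReal.ofReal (-(G p)))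
              ∂(μ ⊗ₘ κ) := by
            refine lintegral_mono_ae ?_
            filter_upwards [heq] with p hp
            calc ENNReal.ofReal (F p)
                = ENNReal.ofReal ((F p + G p) + -(G p)) := by rw [add_neg_cancel_right]
              _ ≤ ENNReal.ofReal (F p + G p) + ENNReal.ofReal (-(G p)) := ENNReal.ofReal_add_le
              _ = _ := by rw [← hp]
        _ = ∫⁻ p, ENNReal.ofReal (llr (μ ⊗ₘ κ) (ν ⊗ₘ η) p) ∂(μ ⊗ₘ κ)
              + ∫⁻ p, ENNReal.ofReal (-(G p)) ∂(μ ⊗ₘ κ) :=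
            lintegral_add_left (measurable_llr _ _).ennreal_ofReal _
        _ < ∞ := ENNReal.add_lt_top.mpr ⟨hint_pos, hneg.trans_lt ENNReal.one_lt_top⟩
    have key1 : ∫⁻ p, ENNReal.ofReal (llr μ ν p.1) ∂(μ ⊗ₘ κ) < ∞ :=
      key _ L2 hL1meas hllr_eq hnegL2
    have key2 : ∫⁻ p, ENNReal.ofReal (L2 p) ∂(μ ⊗ₘ κ) < ∞ := by
      refine key L2 _ hL2meas ?_ hnegL1
      filter_upwards [hllr_eq] with p hp
      rw [hp]; ring
    have hL1int : Integrable (fun p => llr μ ν p.1) (μ ⊗ₘ κ) :=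
      (integrable_iff_ofReal hL1meas).mpr ⟨key1, hnegL1.trans_lt ENNReal.one_lt_top⟩
    have hL2int : Integrable L2 (μ ⊗ₘ κ) :=
      (integrable_iff_ofReal hL2meas).mpr ⟨key2, hnegL2.trans_lt ENNReal.one_lt_top⟩
    have hllrμν_int : Integrable (llr μ ν) μ :=
      (integrable_iff_ofReal (measurable_llr μ ν)).mpr
        ⟨by rw [← hposL1]; exact key1,
         (lintegral_ofReal_neg_llr_le h1).trans_lt ENNReal.one_lt_top⟩
    have hcp := (Measure.integrable_compProd_iff hL2meas.aestronglyMeasurable).mp hL2int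
    have hinner_int : ∀ᵐ φ ∂μ, Integrable (llr (κ φ) (η φ)) (κ φ) := by
      filter_upwards [hcp.1, hinner] with φ hφ hin
      exact (integrable_congr hin).mp hφ
    set I : Φ → ℝ := fun φ => ∫ h, L2 (φ, h) ∂κ φ with hI
    have hIsm : StronglyMeasurable I :=
      MeasureTheory.StronglyMeasurable.integral_kernel_prod_right (κ := κ)
        (f := fun φ h => L2 (φ, h))
        ((hL2meas.comp (measurable_fst.prodMk measurable_snd)).stronglyMeasurable)
    have hIint : Integrable I μ := by
      refine hcp.2.mono hIsm.aestronglyMeasurable (ae_of_all _ fun φ => ?_)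
      calc ‖I φ‖ ≤ ∫ h, ‖L2 (φ, h)‖ ∂κ φ := norm_integral_le_integral_norm _
        _ ≤ ‖∫ h, ‖L2 (φ, h)‖ ∂κ φ‖ := le_abs_self _
    have hIeq : ∀ᵐ φ ∂μ, I φ = ∫ h, llr (κ φ) (η φ) h ∂κ φ := by
      filter_upwards [hinner] with φ hin
      exact integral_congr_ae hin
    have hInonneg : ∀ᵐ φ ∂μ, 0 ≤ I φ := by
      filter_upwards [hIeq, h2, hinner_int] with φ he hφ hint2
      rw [he]
      exact integral_llr_nonneg hφ hint2
    have hklφ : ∀ᵐ φ ∂μ, klDiv (κ φ) (η φ) = ENNReal.ofReal (I φ) := by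
      filter_upwards [hIeq, h2, hinner_int] with φ he hφ hint2
      rw [klDiv_of_ac_of_integrable hφ hint2, he]
    have hRHS2 : ∫⁻ φ, klDiv (κ φ) (η φ) ∂μ = ENNReal.ofReal (∫ φ, I φ ∂μ) := by
      rw [lintegral_congr_ae hklφ, ← ofReal_integral_eq_lintegral_ofReal hIint hInonneg]
    have hintegral : ∫ p, llr (μ ⊗ₘ κ) (ν ⊗ₘ η) p ∂(μ ⊗ₘ κ)
        = ∫ x, llr μ ν x ∂μ + ∫ φ, I φ ∂μ := by
      rw [integral_congr_ae hllr_eq, integral_add hL1int hL2int]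
      congr 1
      · rw [integral_fst_aux _ (by rw [hfst]; exact (measurable_llr μ ν).aestronglyMeasurable),
          hfst]
      · exact Measure.integral_compProd hL2int
    rw [klDiv_of_ac_of_integrable hac hint, klDiv_of_ac_of_integrable h1 hllrμν_int, hRHS2,
      hintegral, ENNReal.ofReal_add (integral_llr_nonneg h1 hllrμν_int)
        (integral_nonneg_of_ae hInonneg)]
  · rw [klDiv_of_not_integrable hint]
    have hpos_top : ∫⁻ p, ENNReal.ofReal (llr (μ ⊗ₘ κ) (ν ⊗ₘ η) p) ∂(μ ⊗ₘ κ) = ∞ := by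
      by_contra h
      exact hint ((integrable_iff_ofReal (measurable_llr _ _)).mpr
        ⟨lt_top_iff_ne_top.mpr h,
         (lintegral_ofReal_neg_llr_le hac).trans_lt ENNReal.one_lt_top⟩)
    have hsplit : (∞ : ℝ≥0∞) ≤ ∫⁻ p, ENNReal.ofReal (llr μ ν p.1) ∂(μ ⊗ₘ κ)
        + ∫⁻ p, ENNReal.ofReal (L2 p) ∂(μ ⊗ₘ κ) := by
      rw [← lintegral_add_left hL1meas.ennreal_ofReal, ← hpos_top]
      refine lintegral_mono_ae ?_
      filter_upwards [hllr_eq] with p hp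
      rw [hp]
      exact ENNReal.ofReal_add_le
    by_cases hA : ∫⁻ p, ENNReal.ofReal (llr μ ν p.1) ∂(μ ⊗ₘ κ) = ∞
    · have hnotint : ¬ Integrable (llr μ ν) μ := by
        intro hcon
        have hfin := ((integrable_iff_ofReal (measurable_llr μ ν)).mp hcon).1
        rw [← hposL1] at hfin
        exact absurd hA hfin.ne
      rw [klDiv_of_not_integrable hnotint, top_add]
    · have hD : ∫⁻ p, ENNReal.ofReal (L2 p) ∂(μ ⊗ₘ κ) = ∞ := by
        by_contra hD
        exact absurd (lt_of_le_of_lt hsplit (ENNReal.add_lt_top.mpr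
          ⟨lt_top_iff_ne_top.mpr hA, lt_top_iff_ne_top.mpr hD⟩)) (lt_irrefl _)
      have hDeq : ∫⁻ p, ENNReal.ofReal (L2 p) ∂(μ ⊗ₘ κ)
          = ∫⁻ φ, ∫⁻ h, ENNReal.ofReal (L2 (φ, h)) ∂κ φ ∂μ :=
        Measure.lintegral_compProd hL2meas.ennreal_ofReal
      have hbound : ∀ᵐ φ ∂μ, ∫⁻ h, ENNReal.ofReal (L2 (φ, h)) ∂κ φ
          ≤ klDiv (κ φ) (η φ) + 1 := by
        filter_upwards [hinner] with φ hin
        have heq2 : ∫⁻ h, ENNReal.ofReal (L2 (φ, h)) ∂κ φ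
            = ∫⁻ h, ENNReal.ofReal (llr (κ φ) (η φ) h) ∂κ φ := by
          refine lintegral_congr_ae ?_
          filter_upwards [hin] with h hh
          rw [hh]
        rw [heq2]
        exact lintegral_ofReal_llr_le_klDiv_add_one
      have htop2 : ∫⁻ φ, klDiv (κ φ) (η φ) ∂μ = ∞ := by
        by_contra htop'
        have hle : ∫⁻ φ, ∫⁻ h, ENNReal.ofReal (L2 (φ, h)) ∂κ φ ∂μ
            ≤ ∫⁻ φ, (klDiv (κ φ) (η φ) + 1) ∂μ := lintegral_mono_ae hbound
        rw [lintegral_add_right' _ aemeasurable_const] at hle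
        simp only [lintegral_one, measure_univ, mul_one] at hle
        rw [← hDeq] at hle
        exact absurd hD (hle.trans_lt (ENNReal.add_lt_top.mpr
          ⟨lt_top_iff_ne_top.mpr htop', ENNReal.one_lt_top⟩)).ne
      rw [htop2, add_top]


end Chain

end KLAux

/-- Value of the constrained minimum in Lemma 1(a): every `q` with first marginal `μ` satisfies
`KL(q‖π) = KL(μ‖π.fst) + ∫ KL(q(·|φ)‖π(·|φ)) dμ(φ)`; in particular the minimum over the family
`F_cut` equals `KL(μ‖π.fst)` and is attained at the cut posterior `π_cut = μ ⊗ₘ π.condKernel`. -/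
theorem klDiv_value_on_cut_family
    {Φ H : Type*} [MeasurableSpace Φ] [StandardBorelSpace Φ]
    [MeasurableSpace H] [StandardBorelSpace H] [Nonempty H]
    (π : Measure (Φ × H)) [IsProbabilityMeasure π]
    (μ : Measure Φ) [IsProbabilityMeasure μ] :
    (∀ (q : Measure (Φ × H)) [IsProbabilityMeasure q], q.fst = μ →
        klDiv q π = klDiv μ π.fst + ∫⁻ φ, klDiv (q.condKernel φ) (π.condKernel φ) ∂μ) ∧
    klDiv (μ ⊗ₘ π.condKernel) π = klDiv μ π.fst := by
  have hπd : π.fst ⊗ₘ π.condKernel = π := π.disintegrate π.condKernel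
  haveI : IsProbabilityMeasure π.fst := by
    constructor
    rw [Measure.fst_apply MeasurableSet.univ]
    simp
  constructor
  · intro q _ hq
    have hqd : q.fst ⊗ₘ q.condKernel = q := q.disintegrate q.condKernel
    rw [hq] at hqd
    calc klDiv q π = klDiv (μ ⊗ₘ q.condKernel) (π.fst ⊗ₘ π.condKernel) := by rw [hqd, hπd]
      _ = klDiv μ π.fst + ∫⁻ φ, klDiv (q.condKernel φ) (π.condKernel φ) ∂μ :=
        KLAux.klDiv_compProd μ π.fst q.condKernel π.condKernel
  · calc klDiv (μ ⊗ₘ π.condKernel) π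
        = klDiv (μ ⊗ₘ π.condKernel) (π.fst ⊗ₘ π.condKernel) := by rw [hπd]
      _ = klDiv μ π.fst + ∫⁻ φ, klDiv (π.condKernel φ) (π.condKernel φ) ∂μ :=
        KLAux.klDiv_compProd μ π.fst π.condKernel π.condKernel
      _ = klDiv μ π.fst := by
        have : ∀ φ, klDiv (π.condKernel φ) (π.condKernel φ) = 0 := fun φ =>
          KLAux.klDiv_self _
        simp [this]
end

section
/- Uniqueness of the minimizer in Lemma 1(a): suppose KL(μ ‖ π.fst) < ∞ and q ∈ F_cut satisfies KL(q ‖ π) = KL(μ ‖ π.fst). Then the conditional kernels agree μ-almost everywhere, i.e., q(·|φ) = π(·|φ) for μ-a.e. φ ∈ Φ, and consequently q = π_cut. -/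
open MeasureTheory ProbabilityTheory
open scoped ENNReal NNReal Classical

lemma aux_sub_one_le_mul_log {x : ℝ} (hx : 0 ≤ x) : x - 1 ≤ x * Real.log x := by
  rcases eq_or_lt_of_le hx with h | h
  · simp [← h]
  · have h1 : Real.log x⁻¹ ≤ x⁻¹ - 1 := Real.log_le_sub_one_of_pos (by positivity)
    rw [Real.log_inv] at h1
    have h2 := mul_le_mul_of_nonneg_left h1 h.le
    rw [mul_sub, mul_inv_cancel₀ h.ne', mul_neg] at h2
    linarith

lemma aux_eq_one_of_mul_log_eq {x : ℝ} (hx : 0 ≤ x) (h : x * Real.log x = x - 1) : x = 1 := by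
  rcases eq_or_lt_of_le hx with h0 | h0
  · exfalso; rw [← h0] at h; norm_num at h
  · by_contra hne
    have h1 : Real.log x⁻¹ < x⁻¹ - 1 :=
      Real.log_lt_sub_one_of_pos (by positivity) (fun hc => hne (inv_eq_one.mp hc))
    rw [Real.log_inv] at h1
    have h2 := mul_lt_mul_of_pos_left h1 h0
    rw [mul_sub, mul_inv_cancel₀ h0.ne', mul_neg] at h2
    linarith

/-- Gibbs inequality: nonnegativity of KL. -/
lemma aux_integral_llr_nonneg_s4 {α : Type*} [MeasurableSpace α] {μ ν : Measure α}
    [IsProbabilityMeasure μ] [IsProbabilityMeasure ν] (hμν : μ ≪ ν)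
    (hint : Integrable (llr μ ν) μ) : 0 ≤ ∫ x, llr μ ν x ∂μ := by
  have h1 : ∫ x, llr μ ν x ∂μ = ∫ x, (μ.rnDeriv ν x).toReal • llr μ ν x ∂ν :=
    (integral_rnDeriv_smul hμν).symm
  rw [h1]
  have hint' : Integrable (fun x => (μ.rnDeriv ν x).toReal • llr μ ν x) ν :=
    (integrable_rnDeriv_smul_iff hμν).mpr hint
  have hint2 : Integrable (fun x => (μ.rnDeriv ν x).toReal - 1) ν :=
    Measure.integrable_toReal_rnDeriv.sub (integrable_const 1)
  have hle : ∀ x, (μ.rnDeriv ν x).toReal - 1 ≤ (μ.rnDeriv ν x).toReal • llr μ ν x := by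
    intro x
    simpa [llr, smul_eq_mul] using
      aux_sub_one_le_mul_log (ENNReal.toReal_nonneg (a := μ.rnDeriv ν x))
  have h2 : ∫ x, ((μ.rnDeriv ν x).toReal - 1) ∂ν ≤ ∫ x, (μ.rnDeriv ν x).toReal • llr μ ν x ∂ν :=
    integral_mono hint2 hint' hle
  have h3 : ∫ x, ((μ.rnDeriv ν x).toReal - 1) ∂ν = 0 := by
    rw [integral_sub Measure.integrable_toReal_rnDeriv (integrable_const 1),
      Measure.integral_toReal_rnDeriv hμν]
    simp
  linarith

/-- Equality case of Gibbs: KL = 0 implies equality of measures. -/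
lemma aux_eq_of_integral_llr_eq_zero {α : Type*} [MeasurableSpace α] {μ ν : Measure α}
    [IsProbabilityMeasure μ] [IsProbabilityMeasure ν] (hμν : μ ≪ ν)
    (hint : Integrable (llr μ ν) μ) (hzero : ∫ x, llr μ ν x ∂μ = 0) : μ = ν := by
  set f : α → ℝ := fun x => (μ.rnDeriv ν x).toReal with hf
  have hf_nonneg : ∀ x, 0 ≤ f x := fun x => ENNReal.toReal_nonneg
  have hint' : Integrable (fun x => f x • llr μ ν x) ν :=
    (integrable_rnDeriv_smul_iff hμν).mpr hint
  have hintf : Integrable f ν := Measure.integrable_toReal_rnDeriv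
  set F : α → ℝ := fun x => f x * Real.log (f x) - (f x - 1) with hF
  have hF_nonneg : ∀ x, 0 ≤ F x := fun x => by
    have := aux_sub_one_le_mul_log (hf_nonneg x); simp [hF]; linarith
  have hFint : Integrable F ν := by
    have : Integrable (fun x => f x * Real.log (f x)) ν := by
      simpa [llr, smul_eq_mul, hf] using hint'
    exact this.sub (hintf.sub (integrable_const 1))
  have hFzero : ∫ x, F x ∂ν = 0 := by
    have e1 : ∫ x, f x * Real.log (f x) ∂ν = 0 := by
      have h : ∫ x, f x • llr μ ν x ∂ν = ∫ x, llr μ ν x ∂μ := integral_rnDeriv_smul hμν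
      rw [hzero] at h
      simpa [llr, smul_eq_mul, hf] using h
    have e2 : ∫ x, (f x - 1) ∂ν = 0 := by
      rw [integral_sub hintf (integrable_const 1), Measure.integral_toReal_rnDeriv hμν]; simp
    have hia : Integrable (fun x => f x * Real.log (f x)) ν := by
      simpa [llr, smul_eq_mul, hf] using hint'
    have hib : Integrable (fun x => f x - 1) ν := hintf.sub (integrable_const 1)
    have : ∫ x, F x ∂ν = ∫ x, (f x * Real.log (f x) - (f x - 1)) ∂ν := rfl
    rw [this, integral_sub hia hib, e1, e2, sub_zero]
  have hFae : F =ᵐ[ν] 0 :=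
    (integral_eq_zero_iff_of_nonneg hF_nonneg hFint).mp hFzero
  have hfae : f =ᵐ[ν] 1 := by
    filter_upwards [hFae] with x hx
    have : f x * Real.log (f x) = f x - 1 := by simp [hF] at hx; linarith
    exact aux_eq_one_of_mul_log_eq (hf_nonneg x) this
  have hrn : μ.rnDeriv ν =ᵐ[ν] 1 := by
    filter_upwards [hfae, Measure.rnDeriv_lt_top μ ν] with x hx hlt
    have h1 : (μ.rnDeriv ν x).toReal = 1 := hx
    rw [Pi.one_apply, ← ENNReal.toReal_eq_one_iff]
    exact h1
  calc μ = ν.withDensity (μ.rnDeriv ν) := (Measure.withDensity_rnDeriv_eq μ ν hμν).symm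
    _ = ν.withDensity 1 := withDensity_congr_ae hrn
    _ = ν := by simp

/-- Uniqueness of the minimizer in Lemma 1(a): if `KL(μ‖π.fst) < ∞` and a probability measure `q`
with first marginal `μ` attains `KL(q‖π) = KL(μ‖π.fst)`, then its disintegration kernel agrees
with that of `π` for `μ`-almost every `φ`, and consequently `q` equals the cut posterior. -/
theorem cut_posterior_unique_minimizer
    {Φ H : Type*} [MeasurableSpace Φ] [StandardBorelSpace Φ]
    [MeasurableSpace H] [StandardBorelSpace H] [Nonempty H]
    (π : Measure (Φ × H)) [IsProbabilityMeasure π]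
    (μ : Measure Φ) [IsProbabilityMeasure μ]
    (q : Measure (Φ × H)) [IsProbabilityMeasure q]
    (hq : q.fst = μ)
    (hfin : klDiv μ π.fst < ∞)
    (hmin : klDiv q π = klDiv μ π.fst) :
    (∀ᵐ φ ∂μ, q.condKernel φ = π.condKernel φ) ∧ q = μ ⊗ₘ π.condKernel := by
  classical
  obtain ⟨hμν, hint_μ⟩ : μ ≪ π.fst ∧ Integrable (llr μ π.fst) μ := by
    by_contra h
    rw [klDiv, if_neg h] at hfin
    exact lt_irrefl _ hfin
  obtain ⟨hqπ, hint_q⟩ : q ≪ π ∧ Integrable (llr q π) q := by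
    by_contra h
    rw [hmin.symm, klDiv, if_neg h] at hfin
    exact lt_irrefl _ hfin
  set ν : Measure Φ := π.fst with hνdef
  set κ := π.condKernel with hκdef
  set m : Measure (Φ × H) := μ ⊗ₘ κ with hmdef
  set g : Φ × H → ℝ≥0∞ := fun p => μ.rnDeriv ν p.1 with hgdef
  have hg_meas : Measurable g := (Measure.measurable_rnDeriv μ ν).comp measurable_fst
  have hπ : ν ⊗ₘ κ = π := π.disintegrate π.condKernel
  -- m is π with density dμ/dν ∘ fst
  have hm : m = π.withDensity g := by
    ext s hs
    rw [hmdef, Measure.compProd_apply hs, withDensity_apply _ hs, ← hπ]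
    have h1 : ∫⁻ p in s, g p ∂(ν ⊗ₘ κ) = ∫⁻ p, s.indicator g p ∂(ν ⊗ₘ κ) :=
      (lintegral_indicator hs g).symm
    rw [h1, Measure.lintegral_compProd (hg_meas.indicator hs)]
    have h2 : ∀ φ, ∫⁻ η, s.indicator g (φ, η) ∂(κ φ)
        = μ.rnDeriv ν φ * κ φ (Prod.mk φ ⁻¹' s) := by
      intro φ
      have : ∀ η, s.indicator g (φ, η)
          = (Prod.mk φ ⁻¹' s).indicator (fun _ => μ.rnDeriv ν φ) η := by
        intro η
        by_cases hmem : (φ, η) ∈ s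
        · exact (Set.indicator_of_mem hmem g).trans
            (Set.indicator_of_mem (s := Prod.mk φ ⁻¹' s) (a := η) hmem (fun _ => μ.rnDeriv ν φ)).symm
        · exact (Set.indicator_of_notMem hmem g).trans
            (Set.indicator_of_notMem (s := Prod.mk φ ⁻¹' s) (a := η) hmem _).symm
      simp_rw [this]
      rw [lintegral_indicator (measurable_prodMk_left hs), setLIntegral_const]
    simp_rw [h2]
    rw [lintegral_rnDeriv_mul hμν
      (Kernel.measurable_kernel_prodMk_left hs).aemeasurable]
  have hmπ : m ≪ π := hm ▸ withDensity_absolutelyContinuous π g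
  have hdm : m.rnDeriv π =ᵐ[π] g := by
    rw [hm]; exact Measure.rnDeriv_withDensity π hg_meas
  -- q gives no mass to {g = 0}
  have hA_meas : MeasurableSet {p : Φ × H | μ.rnDeriv ν p.1 = 0} :=
    hg_meas (measurableSet_singleton 0)
  have hB_meas : MeasurableSet {φ | μ.rnDeriv ν φ = 0} :=
    Measure.measurable_rnDeriv μ ν (measurableSet_singleton 0)
  have hqA : q {p : Φ × H | μ.rnDeriv ν p.1 = 0} = 0 := by
    have hB : μ {φ | μ.rnDeriv ν φ = 0} = 0 := by
      have hpos := Measure.rnDeriv_pos hμν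
      refine measure_mono_null (fun φ hφ => ?_) (ae_iff.mp hpos)
      simp only [Set.mem_setOf_eq] at hφ ⊢
      simp [hφ]
    have : {p : Φ × H | μ.rnDeriv ν p.1 = 0} = Prod.fst ⁻¹' {φ | μ.rnDeriv ν φ = 0} := rfl
    rw [this, ← Measure.fst_apply hB_meas, hq, hB]
  -- q ≪ m
  have hqm : q ≪ m := by
    refine Measure.AbsolutelyContinuous.mk (fun s hs hms => ?_)
    rw [hm, withDensity_apply _ hs] at hms
    have hae : g =ᵐ[π.restrict s] 0 := (lintegral_eq_zero_iff hg_meas).mp hms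
    have hC_meas : MeasurableSet {p : Φ × H | g p ≠ 0} := (hg_meas (measurableSet_singleton 0)).compl
    have h0 : π ({p : Φ × H | g p ≠ 0} ∩ s) = 0 := by
      have h' : (π.restrict s) {p : Φ × H | g p ≠ 0} = 0 := by
        simpa using ae_iff.mp hae
      rwa [Measure.restrict_apply hC_meas] at h'
    have hq0 : q ({p : Φ × H | g p ≠ 0} ∩ s) = 0 := hqπ h0
    have hsub : s ⊆ ({p : Φ × H | g p ≠ 0} ∩ s) ∪ {p : Φ × H | μ.rnDeriv ν p.1 = 0} := by
      intro p hp
      by_cases hgp : g p = 0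
      · exact Or.inr hgp
      · exact Or.inl ⟨hgp, hp⟩
    refine le_antisymm ?_ zero_le
    calc q s ≤ q (({p : Φ × H | g p ≠ 0} ∩ s) ∪ {p : Φ × H | μ.rnDeriv ν p.1 = 0}) :=
          measure_mono hsub
      _ ≤ q ({p : Φ × H | g p ≠ 0} ∩ s) + q {p : Φ × H | μ.rnDeriv ν p.1 = 0} :=
          measure_union_le _ _
      _ = 0 := by rw [hq0, hqA, add_zero]
  -- chain rule for llr, q-a.e.
  have hmul' : q.rnDeriv m * m.rnDeriv π =ᵐ[q] q.rnDeriv π :=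
    hqπ.ae_le (Measure.rnDeriv_mul_rnDeriv hqm)
  have hmul : ∀ᵐ p ∂q, q.rnDeriv π p = q.rnDeriv m p * m.rnDeriv π p := by
    filter_upwards [hmul'] with p hp
    exact hp.symm
  have h1 : ∀ᵐ p ∂q, 0 < q.rnDeriv m p := Measure.rnDeriv_pos hqm
  have h2 : ∀ᵐ p ∂q, q.rnDeriv m p < ∞ := hqm.ae_le (Measure.rnDeriv_lt_top q m)
  have h3 : ∀ᵐ p ∂q, μ.rnDeriv ν p.1 ≠ 0 := by
    rw [ae_iff]
    simpa using hqA
  have h4 : ∀ᵐ p ∂q, μ.rnDeriv ν p.1 < ∞ := by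
    have hνlt := Measure.rnDeriv_lt_top μ ν
    have hD_meas : MeasurableSet {φ | ¬ μ.rnDeriv ν φ < ∞} :=
      ((Measure.measurable_rnDeriv μ ν) (measurableSet_singleton ∞)).congr (by
        ext φ; simp [lt_top_iff_ne_top])
    have hπ0 : π {p : Φ × H | ¬ μ.rnDeriv ν p.1 < ∞} = 0 := by
      have : {p : Φ × H | ¬ μ.rnDeriv ν p.1 < ∞} = Prod.fst ⁻¹' {φ | ¬ μ.rnDeriv ν φ < ∞} := rfl
      rw [this, ← Measure.fst_apply hD_meas]
      exact ae_iff.mp hνlt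
    exact ae_iff.mpr (hqπ hπ0)
  have hdmq : m.rnDeriv π =ᵐ[q] g := hqπ.ae_le hdm
  have hllr : llr q π =ᵐ[q] fun p => llr q m p + llr μ ν p.1 := by
    filter_upwards [hmul, hdmq, h1, h2, h3, h4] with p hp hdp hpos hlt hne hlt2
    have hgp : m.rnDeriv π p = μ.rnDeriv ν p.1 := hdp
    rw [llr, hp, hgp, ENNReal.toReal_mul, Real.log_mul, llr, llr]
    · exact ENNReal.toReal_ne_zero.mpr ⟨hpos.ne', hlt.ne⟩
    · exact ENNReal.toReal_ne_zero.mpr ⟨hne, hlt2.ne⟩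
  -- integrability and integral of the marginal part
  have hmap : q.map Prod.fst = μ := hq
  have hint2 : Integrable (fun p : Φ × H => llr μ ν p.1) q := by
    have := (integrable_map_measure (stronglyMeasurable_llr μ ν).aestronglyMeasurable
      measurable_fst.aemeasurable (μ := q) (f := Prod.fst)).mp (by rw [hmap]; exact hint_μ)
    simpa [Function.comp_def] using this
  have hint_qm : Integrable (llr q m) q := by
    refine (hint_q.sub hint2).congr ?_
    filter_upwards [hllr] with p hp
    simp only [Pi.sub_apply]
    rw [hp]
    ring
  have hint_split : ∫ p, llr q π p ∂q = ∫ p, llr q m p ∂q + ∫ p, llr μ ν p.1 ∂q := by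
    rw [integral_congr_ae hllr, integral_add hint_qm hint2]
  have hint_marg : ∫ p, llr μ ν p.1 ∂q = ∫ φ, llr μ ν φ ∂μ := by
    have h := integral_map (φ := Prod.fst) (μ := q) measurable_fst.aemeasurable
      (f := llr μ ν) (by rw [hmap]; exact (stronglyMeasurable_llr μ ν).aestronglyMeasurable)
    rw [hmap] at h
    exact h.symm
  -- equality of integrals from hmin
  have hA_nonneg : 0 ≤ ∫ p, llr q π p ∂q := aux_integral_llr_nonneg_s4 hqπ hint_q
  have hB_nonneg : 0 ≤ ∫ φ, llr μ ν φ ∂μ := aux_integral_llr_nonneg_s4 hμν hint_μ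
  have hint_eq : ∫ p, llr q π p ∂q = ∫ φ, llr μ ν φ ∂μ := by
    rw [klDiv, if_pos ⟨hqπ, hint_q⟩, klDiv, if_pos ⟨hμν, hint_μ⟩] at hmin
    exact (ENNReal.ofReal_eq_ofReal_iff hA_nonneg hB_nonneg).mp hmin
  have hzero : ∫ p, llr q m p ∂q = 0 := by
    have := hint_split
    rw [hint_marg, hint_eq] at this
    linarith
  -- conclude q = m
  have hqm_eq : q = m := aux_eq_of_integral_llr_eq_zero hqm hint_qm hzero
  refine ⟨?_, hqm_eq⟩
  have hcomp : q = q.fst ⊗ₘ π.condKernel := by rw [hq]; exact hqm_eq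
  have := ProbabilityTheory.eq_condKernel_of_measure_eq_compProd π.condKernel hcomp
  rw [hq] at this
  filter_upwards [this] with φ hφ
  exact hφ.symm
end
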